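/- For ρ ∈ (−1, 1) let h_ρ(x, y) := (2π√(1−ρ²))^{-1} exp(−(x² − 2ρxy + y²)/(2(1−ρ²))). There exists a constant K < ∞ such that for every ρ ∈ ℝ with |ρ| ≤ 1/2, ∫_{ℝ²} |h_ρ(x, y) − h_0(x, y)| d(x, y) ≤ K · |ρ|, where h_0(x, y) = (2π)^{-1} exp(−(x² + y²)/2). -/

import Mathlib

open Real MeasureTheory

/-- The bivariate standard normal density with correlation `ρ`:
`h_ρ(x,y) = (2π√(1-ρ²))⁻¹ exp(-(x² - 2ρxy + y²)/(2(1-ρ²)))`. -/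
noncomputable def biNormPDF (ρ x y : ℝ) : ℝ :=
  (2 * π * Real.sqrt (1 - ρ ^ 2))⁻¹ *
    Real.exp (-(x ^ 2 - 2 * ρ * x * y + y ^ 2) / (2 * (1 - ρ ^ 2)))

/-- Lipschitz-type estimate for `exp` of negatives. -/
lemma exp_neg_sub_exp_neg_le (a b c : ℝ) (ha : c ≤ a) (hb : c ≤ b) :
    |Real.exp (-a) - Real.exp (-b)| ≤ |a - b| * Real.exp (-c) := by
  wlog hab : b ≤ a generalizing a b
  · rw [abs_sub_comm, abs_sub_comm a b]; exact this b a hb ha (le_of_not_ge hab)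
  have h1 : Real.exp (-a) ≤ Real.exp (-b) := Real.exp_le_exp.2 (by linarith)
  rw [abs_of_nonpos (by linarith), abs_of_nonneg (by linarith)]
  have h2 : Real.exp (-a) = Real.exp (-(a - b)) * Real.exp (-b) := by
    rw [← Real.exp_add]; ring_nf
  have h3 : 1 - (a - b) ≤ Real.exp (-(a - b)) := by
    have := Real.add_one_le_exp (-(a - b)); linarith
  have h4 : Real.exp (-b) ≤ Real.exp (-c) := Real.exp_le_exp.2 (by linarith)
  have h5 : (0:ℝ) < Real.exp (-b) := Real.exp_pos _
  nlinarith [Real.exp_pos (-c)]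

set_option maxHeartbeats 2000000 in
/-- Key pointwise bound. -/
lemma biNormPDF_pointwise (ρ x y : ℝ) (hρ : |ρ| ≤ 1 / 2) :
    |biNormPDF ρ x y - biNormPDF 0 x y| ≤
      |ρ| * ((64 * Real.exp (-(1/8) * x ^ 2)) * Real.exp (-(1/8) * y ^ 2)) := by
  obtain ⟨s, hs_def⟩ : ∃ s : ℝ, s = x ^ 2 + y ^ 2 := ⟨_, rfl⟩
  have hs : 0 ≤ s := by rw [hs_def]; positivity
  have hρ2 : ρ ^ 2 ≤ 1 / 4 := by
    nlinarith [sq_abs ρ, abs_nonneg ρ]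
  have h1r : (3:ℝ)/4 ≤ 1 - ρ ^ 2 := by linarith
  have h1r' : 1 - ρ ^ 2 ≤ 1 := by nlinarith [sq_nonneg ρ]
  obtain ⟨t, ht_def⟩ : ∃ t : ℝ, t = Real.sqrt (1 - ρ ^ 2) := ⟨_, rfl⟩
  have ht0 : 0 ≤ t := ht_def ▸ Real.sqrt_nonneg _
  have ht2 : t ^ 2 = 1 - ρ ^ 2 := ht_def ▸ Real.sq_sqrt (by linarith)
  have htl : 1/2 ≤ t := by nlinarith
  have htu : t ≤ 1 := by nlinarith
  have hπ : (1:ℝ) ≤ π := by linarith [Real.pi_gt_three]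
  -- abbreviations
  obtain ⟨Q, hQ_def⟩ : ∃ Q : ℝ, Q = (x ^ 2 - 2 * ρ * x * y + y ^ 2) / (2 * (1 - ρ ^ 2)) :=
    ⟨_, rfl⟩
  have hrxy : 2 * ρ * x * y ≤ s / 2 ∧ -(s/2) ≤ 2 * ρ * x * y := by
    have h1 : |2 * ρ * x * y| ≤ s / 2 := by
      have : |2 * ρ * x * y| = 2 * |ρ| * |x| * |y| := by
        rw [abs_mul, abs_mul, abs_mul]; simp [abs_of_nonneg, abs_two]
      rw [this]
      nlinarith [sq_abs x, sq_abs y, sq_nonneg (|x| - |y|), abs_nonneg ρ, abs_nonneg x,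
        abs_nonneg y, mul_nonneg (abs_nonneg x) (abs_nonneg y)]
    exact ⟨le_trans (le_abs_self _) h1, by linarith [neg_abs_le (2 * ρ * x * y)]⟩
  have hden : (3:ℝ)/2 ≤ 2 * (1 - ρ ^ 2) := by linarith
  have hden' : 2 * (1 - ρ ^ 2) ≤ 2 := by linarith
  have hdenpos : (0:ℝ) < 2 * (1 - ρ ^ 2) := by linarith
  have hQ : s / 4 ≤ Q := by
    rw [hQ_def, le_div_iff₀ hdenpos, hs_def]
    nlinarith [hrxy.1, hs_def ▸ hs]
  -- |Q - s/2| ≤ |ρ| * s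
  have hQP : |Q - s / 2| ≤ |ρ| * s := by
    have hEq : Q - s / 2 = (ρ ^ 2 * s - 2 * ρ * x * y) / (2 * (1 - ρ ^ 2)) := by
      rw [hQ_def, hs_def]; field_simp; ring
    rw [hEq, abs_div, abs_of_pos hdenpos, div_le_iff₀ hdenpos]
    have hnum : |ρ ^ 2 * s - 2 * ρ * x * y| ≤ (3/2) * (|ρ| * s) := by
      have h1 : |ρ ^ 2 * s| ≤ (1/2) * (|ρ| * s) := by
        rw [abs_mul, abs_of_nonneg hs, abs_pow]
        have hh : |ρ| ^ 2 ≤ (1/2) * |ρ| := by nlinarith [abs_nonneg ρ]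
        nlinarith [mul_le_mul_of_nonneg_right hh hs]
      have h2 : |2 * ρ * x * y| ≤ |ρ| * s := by
        have : |2 * ρ * x * y| = 2 * |ρ| * |x| * |y| := by
          rw [abs_mul, abs_mul, abs_mul]; simp [abs_of_nonneg, abs_two]
        rw [this, hs_def]
        nlinarith [sq_abs x, sq_abs y, sq_nonneg (|x| - |y|), abs_nonneg ρ,
          mul_nonneg (abs_nonneg x) (abs_nonneg y)]
      calc |ρ ^ 2 * s - 2 * ρ * x * y| ≤ |ρ ^ 2 * s| + |2 * ρ * x * y| := abs_sub _ _
        _ ≤ (3/2) * (|ρ| * s) := by linarith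
    have hmm := mul_le_mul_of_nonneg_left hden (mul_nonneg (abs_nonneg ρ) hs)
    nlinarith [hnum]
  -- rewrite the two densities
  have h0 : biNormPDF 0 x y = (2 * π)⁻¹ * Real.exp (-(s / 2)) := by
    rw [hs_def]
    unfold biNormPDF
    norm_num [Real.sqrt_one, neg_div]
    ring
  have hρρ : biNormPDF ρ x y = (2 * π * t)⁻¹ * Real.exp (-Q) := by
    rw [hQ_def, ht_def]
    unfold biNormPDF
    rw [neg_div]
  rw [hρρ, h0]
  have hdecomp : (2 * π * t)⁻¹ * Real.exp (-Q) - (2 * π)⁻¹ * Real.exp (-(s / 2))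
      = ((2 * π * t)⁻¹ - (2 * π)⁻¹) * Real.exp (-Q)
        + (2 * π)⁻¹ * (Real.exp (-Q) - Real.exp (-(s / 2))) := by ring
  rw [hdecomp]
  have hexpQ : Real.exp (-Q) ≤ Real.exp (-(s/4)) := Real.exp_le_exp.2 (by linarith)
  -- coefficient bound
  have hcoef : (0:ℝ) ≤ (2 * π * t)⁻¹ - (2 * π)⁻¹ ∧ (2 * π * t)⁻¹ - (2 * π)⁻¹ ≤ |ρ| := by
    have h2πpos : (0:ℝ) < 2 * π := by linarith
    have htpos : (0:ℝ) < t := by linarith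
    constructor
    · have h1 : (2 * π)⁻¹ ≤ (2 * π * t)⁻¹ :=
        inv_anti₀ (by nlinarith) (by nlinarith)
      linarith
    · have hEq : (2 * π * t)⁻¹ - (2 * π)⁻¹ = (2 * π)⁻¹ * ((1 - t) / t) := by
        field_simp
      rw [hEq]
      have h1t : 1 - t ≤ ρ ^ 2 := by nlinarith
      have h2 : (1 - t) / t ≤ 2 * ρ ^ 2 := by
        rw [div_le_iff₀ htpos]; nlinarith [sq_nonneg ρ]
      have h3 : (2 * π)⁻¹ ≤ 1 := by
        rw [inv_le_one_iff₀]; right; linarith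
      have h4 : 2 * ρ ^ 2 ≤ |ρ| := by nlinarith [sq_abs ρ, abs_nonneg ρ]
      have h5 : 0 ≤ (1 - t) / t := div_nonneg (by linarith) (le_of_lt htpos)
      nlinarith [abs_nonneg ρ]
  -- second term bound
  have hterm2 : |Real.exp (-Q) - Real.exp (-(s / 2))| ≤ |ρ| * s * Real.exp (-(s/4)) := by
    have := exp_neg_sub_exp_neg_le Q (s/2) (s/4) hQ (by linarith)
    calc |Real.exp (-Q) - Real.exp (-(s / 2))| ≤ |Q - s/2| * Real.exp (-(s/4)) := this
      _ ≤ |ρ| * s * Real.exp (-(s/4)) := by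
          apply mul_le_mul_of_nonneg_right hQP (le_of_lt (Real.exp_pos _))
  -- combine
  have hexp4pos : (0:ℝ) < Real.exp (-(s/4)) := Real.exp_pos _
  have hexpQpos : (0:ℝ) < Real.exp (-Q) := Real.exp_pos _
  have h2π1 : (2 * π)⁻¹ ≤ 1 := by
    rw [inv_le_one_iff₀]; right; linarith
  have h2πnn : (0:ℝ) ≤ (2 * π)⁻¹ := by positivity
  have hmain : |((2 * π * t)⁻¹ - (2 * π)⁻¹) * Real.exp (-Q)
      + (2 * π)⁻¹ * (Real.exp (-Q) - Real.exp (-(s / 2)))|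
      ≤ |ρ| * ((1 + s) * Real.exp (-(s/4))) := by
    calc |((2 * π * t)⁻¹ - (2 * π)⁻¹) * Real.exp (-Q)
        + (2 * π)⁻¹ * (Real.exp (-Q) - Real.exp (-(s / 2)))|
        ≤ |((2 * π * t)⁻¹ - (2 * π)⁻¹) * Real.exp (-Q)|
          + |(2 * π)⁻¹ * (Real.exp (-Q) - Real.exp (-(s / 2)))| := abs_add_le _ _
      _ ≤ |ρ| * Real.exp (-(s/4)) + |ρ| * s * Real.exp (-(s/4)) := by
          apply add_le_add
          · rw [abs_mul, abs_of_nonneg hcoef.1, abs_of_pos hexpQpos]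
            have := hcoef.2
            nlinarith [abs_nonneg ρ]
          · rw [abs_mul, abs_of_nonneg h2πnn]
            nlinarith [hterm2, abs_sub_abs_le_abs_sub (Real.exp (-Q)) (Real.exp (-(s/2))),
              abs_nonneg (Real.exp (-Q) - Real.exp (-(s / 2))),
              mul_nonneg (mul_nonneg (abs_nonneg ρ) hs) (le_of_lt hexp4pos)]
      _ = |ρ| * ((1 + s) * Real.exp (-(s/4))) := by ring
  refine le_trans hmain ?_
  apply mul_le_mul_of_nonneg_left _ (abs_nonneg ρ)
  -- (1+s) exp(-(s/4)) ≤ 64 exp(-x²/8) exp(-y²/8)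
  have hsplit : Real.exp (-(s/4)) =
      Real.exp (-(1/8) * x ^ 2) * Real.exp (-(1/8) * y ^ 2) * Real.exp (-(s/8)) := by
    rw [← Real.exp_add, ← Real.exp_add, hs_def]; ring_nf
  rw [hsplit]
  subst hs_def
  have h64 : (1 + (x ^ 2 + y ^ 2)) * Real.exp (-((x ^ 2 + y ^ 2)/8)) ≤ 64 := by
    have h1 : (x ^ 2 + y ^ 2)/8 + 1 ≤ Real.exp ((x ^ 2 + y ^ 2)/8) := Real.add_one_le_exp _
    have h2 : Real.exp ((x ^ 2 + y ^ 2)/8) * Real.exp (-((x ^ 2 + y ^ 2)/8)) = 1 := by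
      rw [← Real.exp_add]; simp
    nlinarith [Real.exp_pos (-((x ^ 2 + y ^ 2)/8)), Real.exp_pos ((x ^ 2 + y ^ 2)/8),
      sq_nonneg x, sq_nonneg y]
  have hxe : (0:ℝ) < Real.exp (-(1/8) * x ^ 2) * Real.exp (-(1/8) * y ^ 2) := by positivity
  nlinarith [mul_le_mul_of_nonneg_left h64 (le_of_lt hxe),
    Real.exp_pos (-((x ^ 2 + y ^ 2)/8))]

/-- there is a constant `K` such that for every `ρ` with `|ρ| ≤ 1/2`,
`∫_{ℝ²} |h_ρ(x,y) - h_0(x,y)| d(x,y) ≤ K |ρ|`. -/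
theorem stmt12 :
    ∃ K : ℝ, ∀ ρ : ℝ, |ρ| ≤ 1 / 2 →
      (∫ p : ℝ × ℝ, |biNormPDF ρ p.1 p.2 - biNormPDF 0 p.1 p.2|) ≤ K * |ρ| := by
  have hf : Integrable (fun x : ℝ => 64 * Real.exp (-(1/8) * x ^ 2)) := by
    have := integrable_exp_neg_mul_sq (show (0:ℝ) < 1/8 by norm_num)
    exact this.const_mul 64
  have hg : Integrable (fun x : ℝ => Real.exp (-(1/8) * x ^ 2)) :=
    integrable_exp_neg_mul_sq (show (0:ℝ) < 1/8 by norm_num)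
  have hG : Integrable (fun p : ℝ × ℝ =>
      (64 * Real.exp (-(1/8) * p.1 ^ 2)) * Real.exp (-(1/8) * p.2 ^ 2)) := by
    rw [MeasureTheory.Measure.volume_eq_prod]
    exact hf.mul_prod hg
  refine ⟨∫ p : ℝ × ℝ, (64 * Real.exp (-(1/8) * p.1 ^ 2)) * Real.exp (-(1/8) * p.2 ^ 2), ?_⟩
  intro ρ hρ
  have hGρ : Integrable (fun p : ℝ × ℝ =>
      |ρ| * ((64 * Real.exp (-(1/8) * p.1 ^ 2)) * Real.exp (-(1/8) * p.2 ^ 2))) :=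
    hG.const_mul _
  have hcont : Continuous (fun p : ℝ × ℝ => |biNormPDF ρ p.1 p.2 - biNormPDF 0 p.1 p.2|) := by
    unfold biNormPDF
    fun_prop
  have hint : Integrable (fun p : ℝ × ℝ => |biNormPDF ρ p.1 p.2 - biNormPDF 0 p.1 p.2|) := by
    apply hGρ.mono hcont.aestronglyMeasurable
    filter_upwards with p
    rw [Real.norm_eq_abs, Real.norm_eq_abs, abs_abs]
    refine le_trans (biNormPDF_pointwise ρ p.1 p.2 hρ) (le_abs_self _)
  calc (∫ p : ℝ × ℝ, |biNormPDF ρ p.1 p.2 - biNormPDF 0 p.1 p.2|)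
      ≤ ∫ p : ℝ × ℝ, |ρ| * ((64 * Real.exp (-(1/8) * p.1 ^ 2)) * Real.exp (-(1/8) * p.2 ^ 2)) :=
        integral_mono hint hGρ (fun p => biNormPDF_pointwise ρ p.1 p.2 hρ)
    _ = (∫ p : ℝ × ℝ, (64 * Real.exp (-(1/8) * p.1 ^ 2)) * Real.exp (-(1/8) * p.2 ^ 2)) * |ρ| := by
        rw [integral_const_mul]; ring
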